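/- For every integer n ≥ 0 and every x ∈ O, the matrix M = (ϖ^{−n}, ϖ^{−n−2}·x; 0, ϖ^n) of SL₂(F) satisfies: M ∈ Ū(𝔪)·α₀^{n+2}·K₀ if x is a unit of O; M ∈ Ū(𝔪)·α₀^{n+1}·K₀ if x ∈ 𝔪 ∖ 𝔪²; and M ∈ Ū(𝔪)·α₀^{n}·K₀ if x ∈ 𝔪², where α₀^m = diag(ϖ^{−m}, ϖ^m). -/

import Mathlib

open Matrix Pointwise

/-- For `n ≥ 0` and `x ∈ O`, the matrix
`M = (ϖ^{−n}, ϖ^{−n−2}·x; 0, ϖ^n)` lies in `Ū(𝔪)·α₀^{n+2}·K₀` if `x` is a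
unit, in `Ū(𝔪)·α₀^{n+1}·K₀` if `x ∈ 𝔪 ∖ 𝔪²`, and in `Ū(𝔪)·α₀^{n}·K₀` if
`x ∈ 𝔪²`, where `α₀^m = diag(ϖ^{−m}, ϖ^m)`. -/
theorem stmt_13
    (O : Type*) [CommRing O] [IsDomain O] [IsDiscreteValuationRing O]
    (ϖ : O) (hϖ : Irreducible ϖ)
    (F : Type*) [Field F] [Algebra O F] [IsFractionRing O F]
    (n : ℕ) (x : O)
    (Ubar : Set (Matrix (Fin 2) (Fin 2) F))
    (hUbar : Ubar = {M | ∃ z ∈ IsLocalRing.maximalIdeal O, M = !![1, 0; algebraMap O F z, 1]})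
    (K₀ : Set (Matrix (Fin 2) (Fin 2) F))
    (hK₀ : K₀ = {M | M.det = 1 ∧ ∀ i j, ∃ a : O, M i j = algebraMap O F a})
    (α₀ : ℤ → Matrix (Fin 2) (Fin 2) F)
    (hα₀ : ∀ m : ℤ, α₀ m = !![algebraMap O F ϖ ^ (-m), 0; 0, algebraMap O F ϖ ^ m])
    (M : Matrix (Fin 2) (Fin 2) F)
    (hM : M = !![algebraMap O F ϖ ^ (-(n : ℤ)), algebraMap O F ϖ ^ (-(n : ℤ) - 2) * algebraMap O F x;
          0, algebraMap O F ϖ ^ (n : ℤ)]) :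
    (IsUnit x → M ∈ Ubar * {α₀ ((n : ℤ) + 2)} * K₀) ∧
    (x ∈ IsLocalRing.maximalIdeal O → x ∉ IsLocalRing.maximalIdeal O ^ 2 →
      M ∈ Ubar * {α₀ ((n : ℤ) + 1)} * K₀) ∧
    (x ∈ IsLocalRing.maximalIdeal O ^ 2 → M ∈ Ubar * {α₀ (n : ℤ)} * K₀) := by
  set φ := algebraMap O F with hφ
  have hinj : Function.Injective φ := IsFractionRing.injective O F
  have hp : (φ ϖ) ≠ 0 := by
    simpa using (map_ne_zero_iff φ hinj).mpr hϖ.ne_zero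
  have hmax : IsLocalRing.maximalIdeal O = Ideal.span {ϖ} := hϖ.maximalIdeal_eq
  have key : ∀ (m : ℤ) (z : O), z ∈ IsLocalRing.maximalIdeal O →
      ∀ k : Matrix (Fin 2) (Fin 2) F, k ∈ K₀ →
      (!![1, 0; φ z, 1] : Matrix (Fin 2) (Fin 2) F) * α₀ m * k = M →
      M ∈ Ubar * {α₀ m} * K₀ := by
    intro m z hz k hk heq
    have hL : (!![1, 0; φ z, 1] : Matrix (Fin 2) (Fin 2) F) ∈ Ubar := by
      rw [hUbar]; exact ⟨z, hz, rfl⟩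
    rw [← heq]
    exact Set.mul_mem_mul (Set.mul_mem_mul hL rfl) hk
  have hzmem : ∀ j : ℕ, 1 ≤ j → ∀ c : O, ϖ ^ j * c ∈ IsLocalRing.maximalIdeal O := by
    intro j hj c
    rw [hmax, Ideal.mem_span_singleton]
    exact Dvd.dvd.mul_right (dvd_pow_self ϖ (by omega)) c
  have h2 : (-(n:ℤ)-2) = -(((n+2:ℕ)):ℤ) := by push_cast; ring
  have h3 : ((n:ℤ)+2) = (((n+2:ℕ)):ℤ) := by push_cast; ring
  have h1 : ((n:ℤ)+1) = (((n+1:ℕ)):ℤ) := by push_cast; ring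
  refine ⟨?_, ?_, ?_⟩
  · -- x is a unit
    intro hx
    obtain ⟨x', hxx'⟩ : ∃ y, x * y = 1 := by
      obtain ⟨u, hu⟩ := hx
      exact ⟨↑u⁻¹, by rw [← hu]; exact u.mul_inv⟩
    have hx'x : φ x' * φ x = 1 := by
      rw [← _root_.map_mul, mul_comm x' x, hxx', _root_.map_one]
    refine key ((n : ℤ) + 2) (ϖ ^ (2 * n + 2) * x') (hzmem _ (by omega) _)
      !![φ (ϖ ^ 2), φ x; -φ x', 0] ?_ ?_
    · rw [hK₀]
      refine ⟨by rw [det_fin_two_of, mul_zero, mul_neg, zero_sub, neg_neg, ← _root_.map_mul, hxx', _root_.map_one], ?_⟩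
      intro i j
      fin_cases i <;> fin_cases j
      · exact ⟨ϖ ^ 2, rfl⟩
      · exact ⟨x, rfl⟩
      · exact ⟨-x', by simp⟩
      · exact ⟨0, by simp⟩
    · rw [hα₀, hM]
      ext i j
      fin_cases i <;> fin_cases j <;>
        simp only [Matrix.mul_apply, Matrix.of_apply, Fin.zero_eta, Fin.mk_one, Fin.sum_univ_two, Matrix.cons_val', Matrix.cons_val_zero,
          Matrix.cons_val_one, Matrix.head_cons, Matrix.head_fin_const, Matrix.empty_val',
          Matrix.cons_val_fin_one, _root_.map_mul, _root_.map_pow, h2, h3, neg_neg,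
          _root_.zpow_neg, zpow_natCast] <;>
        field_simp <;>
        first
          | ring1
          | linear_combination (φ ϖ ^ 2 * φ ϖ ^ (n * 2)) * hx'x
  · -- x ∈ 𝔪 \\ 𝔪²
    intro hx hx2
    obtain ⟨c, hc⟩ : ϖ ∣ x := by rwa [hmax, Ideal.mem_span_singleton] at hx
    have hcu : IsUnit c := by
      by_contra hcu
      apply hx2
      obtain ⟨d, hd⟩ : ϖ ∣ c := by
        rw [← Ideal.mem_span_singleton, ← hmax]
        exact (IsLocalRing.mem_maximalIdeal c).mpr hcu
      rw [hmax, Ideal.span_singleton_pow, Ideal.mem_span_singleton]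
      exact ⟨d, by rw [hc, hd]; ring⟩
    obtain ⟨c', hcc'⟩ : ∃ y, c * y = 1 := by
      obtain ⟨u, hu⟩ := hcu
      exact ⟨↑u⁻¹, by rw [← hu]; exact u.mul_inv⟩
    have hc'c : φ c' * φ c = 1 := by
      rw [← _root_.map_mul, mul_comm c' c, hcc', _root_.map_one]
    have hxc : φ x = φ ϖ * φ c := by rw [hc, _root_.map_mul]
    refine key ((n : ℤ) + 1) (ϖ ^ (2 * n + 1) * c') (hzmem _ (by omega) _)
      !![φ ϖ, φ c; -φ c', 0] ?_ ?_
    · rw [hK₀]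
      refine ⟨by rw [det_fin_two_of, mul_zero, mul_neg, zero_sub, neg_neg, ← _root_.map_mul, hcc', _root_.map_one], ?_⟩
      intro i j
      fin_cases i <;> fin_cases j
      · exact ⟨ϖ, rfl⟩
      · exact ⟨c, rfl⟩
      · exact ⟨-c', by simp⟩
      · exact ⟨0, by simp⟩
    · rw [hα₀, hM]
      ext i j
      fin_cases i <;> fin_cases j <;>
        simp only [Matrix.mul_apply, Matrix.of_apply, Fin.zero_eta, Fin.mk_one, Fin.sum_univ_two, Matrix.cons_val', Matrix.cons_val_zero,
          Matrix.cons_val_one, Matrix.head_cons, Matrix.head_fin_const, Matrix.empty_val',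
          Matrix.cons_val_fin_one, _root_.map_mul, _root_.map_pow, hxc, h2, h3, h1, neg_neg,
          _root_.zpow_neg, zpow_natCast] <;>
        field_simp <;>
        first
          | ring1
          | linear_combination (φ ϖ * φ ϖ ^ (n * 2)) * hc'c
  · -- x ∈ 𝔪²
    intro hx
    obtain ⟨y, hy⟩ : ϖ ^ 2 ∣ x := by
      rwa [hmax, Ideal.span_singleton_pow, Ideal.mem_span_singleton] at hx
    have hxy : φ x = φ ϖ * (φ ϖ * φ y) := by
      rw [hy, _root_.map_mul, _root_.map_pow]; ring
    refine key (n : ℤ) 0 (Ideal.zero_mem _)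
      !![1, φ y; 0, 1] ?_ ?_
    · rw [hK₀]
      refine ⟨by rw [det_fin_two_of]; ring, ?_⟩
      intro i j
      fin_cases i <;> fin_cases j
      · exact ⟨1, by simp⟩
      · exact ⟨y, rfl⟩
      · exact ⟨0, by simp⟩
      · exact ⟨1, by simp⟩
    · rw [hα₀, hM]
      ext i j
      fin_cases i <;> fin_cases j <;>
        simp only [Matrix.mul_apply, Matrix.of_apply, Fin.zero_eta, Fin.mk_one, Fin.sum_univ_two, Matrix.cons_val', Matrix.cons_val_zero,
          Matrix.cons_val_one, Matrix.head_cons, Matrix.head_fin_const, Matrix.empty_val',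
          Matrix.cons_val_fin_one, _root_.map_mul, _root_.map_pow, _root_.map_zero, hxy, h2, h3,
          neg_neg, _root_.zpow_neg, zpow_natCast] <;>
        field_simp <;>
        ring1
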